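/- Special case m=2 of the cosine formula: for every integer k ≥ 1, ∑_{j=1}^{∞} (-1)^j/j^{2k} = ∑_{j=0}^{k} ((-1)^{k-j}/(2k-2j)!)·π^{2k-2j}·ζ(2j) + ((-1)^k/(2(2k-1)!))·π^{2k}, where ζ(0) = −1/2; equivalently (2^{1-2k} − 1)·ζ(2k) equals the right-hand side. -/

import Mathlib

open Real Complex

section Aux
open PowerSeries Nat

lemma rescale_X' {R : Type*} [CommSemiring R] (a : R) :
    rescale a (X : R⟦X⟧) = C a * X := by
  ext n
  simp only [coeff_rescale, coeff_X, coeff_C_mul]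
  rcases eq_or_ne n 1 with rfl | h
  · simp
  · simp [h]

lemma bernoulli_poly_eval_half (n : ℕ) :
    (Polynomial.bernoulli n).eval (1/2 : ℚ) = (2 * (1/2 : ℚ)^n - 1) * bernoulli n := by
  have hexp : exp ℚ - 1 ≠ 0 := by
    intro h
    have := congrArg (coeff 1) h
    simp [coeff_exp] at this
  set E := rescale (1/2 : ℚ) (exp ℚ) with hE
  have hE2 : E * E = exp ℚ := by
    rw [hE, exp_mul_exp_eq_exp_add]
    norm_num
  set B := bernoulliPowerSeries ℚ with hB
  have hBX : B * (exp ℚ - 1) = X := bernoulliPowerSeries_mul_exp_sub_one ℚ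
  have h1 : rescale (1/2 : ℚ) B * (E - 1) = C (1/2) * X := by
    rw [show E - 1 = rescale (1/2 : ℚ) (exp ℚ - 1) by rw [map_sub, map_one],
      ← map_mul, hBX, rescale_X']
  have hCX : (2 : ℚ⟦X⟧) * (C (1/2) * X) = X := by
    rw [show (2 : ℚ⟦X⟧) = C 2 from rfl, ← mul_assoc, ← map_mul]
    norm_num
  have key : (PowerSeries.mk fun m => Polynomial.aeval (1/2 : ℚ)
      ((1 / m ! : ℚ) • Polynomial.bernoulli m))
      = 2 * rescale (1/2 : ℚ) B - B := by
    apply mul_right_cancel₀ hexp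
    rw [Polynomial.bernoulli_generating_function (1/2 : ℚ)]
    have expand : (2 * rescale (1/2 : ℚ) B - B) * (exp ℚ - 1)
        = 2 * (rescale (1/2 : ℚ) B * (E - 1)) * (E + 1) - X := by
      rw [← hE2] at hBX ⊢
      ring_nf
      ring_nf at hBX
      linear_combination -hBX
    rw [expand, h1, ← hE]
    linear_combination (-(E + 1)) * hCX
  have hc := congrArg (coeff n) key
  rw [show (2 : ℚ⟦X⟧) = C 2 from rfl] at hc
  simp only [coeff_mk, map_sub, coeff_C_mul, coeff_rescale, hB, bernoulliPowerSeries,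
    coeff_mk, Polynomial.aeval_def, Polynomial.eval₂_smul, Algebra.algebraMap_self,
    Polynomial.eval₂_eq_eval_map, Polynomial.map_id, RingHom.id_apply, Polynomial.eval_smul, smul_eq_mul] at hc
  have hfac : (n ! : ℚ) ≠ 0 := Nat.cast_ne_zero.mpr (Nat.factorial_ne_zero n)
  apply mul_left_cancel₀ (show (1 / (n ! : ℚ)) ≠ 0 by positivity)
  rw [hc, show (1/2:ℚ)^n = 1/2^n by rw [div_pow, one_pow]]
  have h2 : (2:ℚ)^n ≠ 0 := by positivity
  field_simp

end Aux

section Aux2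
open Nat Finset


lemma bernoulli_odd_zero {n : ℕ} (h : Odd n) (h1 : 1 < n) : bernoulli n = 0 := by
  rw [bernoulli_eq_bernoulli'_of_ne_one (by omega)]
  exact bernoulli'_eq_zero_of_odd h h1

lemma sum_split (f : ℕ → ℚ) (k : ℕ) :
    ∑ i ∈ range (2*k+1), f i = ∑ j ∈ range (k+1), f (2*j) + ∑ j ∈ range k, f (2*j+1) := by
  induction k with
  | zero => simp
  | succ k ih =>
    rw [show 2*(k+1)+1 = (2*k+1)+1+1 by ring, sum_range_succ, sum_range_succ,
      sum_range_succ (fun j => f (2*j)), sum_range_succ (fun j => f (2*j+1)), ih]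
    abel

lemma bernoulli_even_sum (k : ℕ) (hk : 1 ≤ k) :
    ∑ j ∈ range (k+1), bernoulli (2*j) * (Nat.choose (2*k) (2*j) : ℚ) * 2^(2*j)
      = (2 - 2^(2*k)) * bernoulli (2*k) + 2*k := by
  have h := bernoulli_poly_eval_half (2*k)
  rw [Polynomial.bernoulli] at h
  simp only [Polynomial.eval_finset_sum, Polynomial.eval_monomial] at h
  -- h : ∑ i in range (2k+1), bernoulli i * choose (2k) i * (1/2)^(2k-i) = (2*(1/2)^(2k)-1) * B
  have h2 := congrArg (fun x : ℚ => 2^(2*k) * x) h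
  simp only [Finset.mul_sum] at h2
  have hterm : ∀ i ∈ range (2*k+1),
      2^(2*k) * (bernoulli i * (Nat.choose (2*k) i : ℚ) * (1/2)^(2*k-i))
        = bernoulli i * (Nat.choose (2*k) i : ℚ) * 2^i := by
    intro i hi
    rw [mem_range] at hi
    have hle : i ≤ 2*k := by omega
    have : (2:ℚ)^(2*k) * (1/2)^(2*k-i) = 2^i := by
      rw [show (1/2:ℚ) = 2⁻¹ by norm_num, inv_pow, ← Nat.sub_add_cancel hle, pow_add]
      field_simp
      rw [Nat.add_sub_cancel]
    calc 2^(2*k) * (bernoulli i * (Nat.choose (2*k) i : ℚ) * (1/2)^(2*k-i))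
        = bernoulli i * (Nat.choose (2*k) i : ℚ) * ((2:ℚ)^(2*k) * (1/2)^(2*k-i)) := by ring
      _ = _ := by rw [this]
  rw [Finset.sum_congr rfl hterm] at h2
  rw [sum_split (fun i => bernoulli i * (Nat.choose (2*k) i : ℚ) * 2^i) k] at h2
  have hodd : ∑ j ∈ range k, bernoulli (2*j+1) * (Nat.choose (2*k) (2*j+1) : ℚ) * 2^(2*j+1)
      = -(2*k) := by
    rw [Finset.sum_eq_single 0]
    · simp [bernoulli_one]
      ring
    · intro j hj hj0
      rw [bernoulli_odd_zero (by exact ⟨j, by ring⟩) (by omega)]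
      ring
    · intro h0
      simp at h0
      omega
  rw [hodd] at h2
  have hrhs : (2:ℚ)^(2*k) * ((2 * (1/2)^(2*k) - 1) * bernoulli (2*k))
      = (2 - 2^(2*k)) * bernoulli (2*k) := by
    have : (2:ℚ)^(2*k) * (1/2)^(2*k) = 1 := by
      rw [show (1/2:ℚ) = 2⁻¹ by norm_num, inv_pow]
      field_simp
    linear_combination (2 * bernoulli (2*k)) * this
  rw [hrhs] at h2
  linear_combination h2

end Aux2

open Nat


theorem alternating_zeta_even (k : ℕ) (hk : 1 ≤ k) :
    ((∑' j : ℕ, ((-1 : ℝ)) ^ (j + 1) / ((j : ℝ) + 1) ^ (2 * k) : ℝ) : ℂ) =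
      (∑ j ∈ Finset.range (k + 1),
        ((-1 : ℂ) ^ (k - j) / (Nat.factorial (2 * k - 2 * j) : ℂ))
          * (π : ℂ) ^ (2 * k - 2 * j) * riemannZeta (2 * j))
      + ((-1 : ℂ) ^ k / (2 * (Nat.factorial (2 * k - 1) : ℂ))) * (π : ℂ) ^ (2 * k)
    ∧ ((2 : ℂ) ^ (1 - 2 * (k : ℤ)) - 1) * riemannZeta (2 * k) =
      (∑ j ∈ Finset.range (k + 1),
        ((-1 : ℂ) ^ (k - j) / (Nat.factorial (2 * k - 2 * j) : ℂ))
          * (π : ℂ) ^ (2 * k - 2 * j) * riemannZeta (2 * j))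
      + ((-1 : ℂ) ^ k / (2 * (Nat.factorial (2 * k - 1) : ℂ))) * (π : ℂ) ^ (2 * k) := by
  have hk0 : k ≠ 0 := by omega
  have hπ : (π : ℂ) ≠ 0 := Complex.ofReal_ne_zero.mpr Real.pi_ne_zero
  have hfac : ∀ m : ℕ, ((m ! : ℕ) : ℂ) ≠ 0 := fun m =>
    Nat.cast_ne_zero.mpr (Nat.factorial_ne_zero m)
  have hζ := riemannZeta_two_mul_nat hk0
  have hterm : ∀ j ∈ Finset.range (k + 1),
      ((-1 : ℂ) ^ (k - j) / (Nat.factorial (2 * k - 2 * j) : ℂ))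
          * (π : ℂ) ^ (2 * k - 2 * j) * riemannZeta (2 * j)
        = (-(-1 : ℂ) ^ k * (π : ℂ) ^ (2 * k) / (2 * ((2 * k)! : ℂ)))
            * ((bernoulli (2*j) * (Nat.choose (2*k) (2*j) : ℚ) * 2^(2*j) : ℚ) : ℂ) := by
    intro j hj
    rw [Finset.mem_range] at hj
    have hjk : j ≤ k := by omega
    rcases Nat.eq_zero_or_pos j with rfl | hj1
    · simp only [Nat.mul_zero, Nat.sub_zero, Nat.cast_zero, mul_zero, riemannZeta_zero,
        Nat.choose_zero_right, Nat.cast_one, bernoulli_zero, pow_zero, mul_one]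
      push_cast
      field_simp
    · have e1 : (-1 : ℂ) ^ (k - j) * (-1 : ℂ) ^ j = (-1) ^ k := by
        rw [← pow_add, Nat.sub_add_cancel hjk]
      have e2 : (π : ℂ) ^ (2*k - 2*j) * (π : ℂ) ^ (2*j) = (π : ℂ) ^ (2*k) := by
        rw [← pow_add]; congr 1; omega
      have e3 : (2 : ℂ) ^ (2*j - 1) * 2 = 2 ^ (2*j) := by
        rw [← pow_succ]; congr 1; omega
      have e4 : ((Nat.choose (2*k) (2*j)) : ℂ) * ((2*j)! : ℂ) * (((2*k - 2*j)!) : ℂ)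
          = ((2*k)! : ℂ) := by
        exact_mod_cast congrArg (Nat.cast : ℕ → ℂ)
          (Nat.choose_mul_factorial_mul_factorial (by omega : 2*j ≤ 2*k))
      rw [show (2 * (j:ℂ)) = ((2 * j : ℕ) : ℂ) by push_cast; ring,
        show ((2 * j : ℕ) : ℂ) = 2 * ((j:ℕ) : ℂ) by push_cast; ring,
        riemannZeta_two_mul_nat (by omega : j ≠ 0)]
      push_cast
      have f1 := hfac (2*k-2*j)
      have f2 := hfac (2*j)
      have f3 := hfac (2*k)
      field_simp
      linear_combination
        (-2 * (π:ℂ)^(2*k-2*j) * (π:ℂ)^(2*j) * (2:ℂ)^(2*j-1) * (bernoulli (2*j) : ℂ)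
            * (((2*k)! : ℕ) : ℂ)) * e1
        + (-2 * (-1:ℂ)^k * (2:ℂ)^(2*j-1) * (bernoulli (2*j) : ℂ) * (((2*k)! : ℕ) : ℂ)) * e2
        + (-(-1:ℂ)^k * (bernoulli (2*j) : ℂ) * (π:ℂ)^(2*k) * (((2*k)! : ℕ) : ℂ)) * e3
        + ((-1:ℂ)^k * (bernoulli (2*j) : ℂ) * (π:ℂ)^(2*k) * (2:ℂ)^(2*j)) * e4
  have hz : (2:ℂ)^(1-2*(k:ℤ)) = 2 / 2^(2*k) := by
    rw [eq_div_iff (pow_ne_zero _ (two_ne_zero)), ← zpow_natCast (2:ℂ) (2*k),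
      ← zpow_add₀ (two_ne_zero)]
    norm_num
  have hfs : (((2*k)! : ℕ) : ℂ) = (2*k) * (((2*k-1)! : ℕ) : ℂ) := by
    rw [show 2*k = (2*k-1)+1 by omega, Nat.factorial_succ]
    push_cast [show (2*k-1)+1 = 2*k by omega]
    ring
  have e3' : (2:ℂ)^(2*k-1) * 2 = 2^(2*k) := by
    rw [← pow_succ]; congr 1; omega
  have key2 : (∑ j ∈ Finset.range (k + 1),
        ((-1 : ℂ) ^ (k - j) / (Nat.factorial (2 * k - 2 * j) : ℂ))
          * (π : ℂ) ^ (2 * k - 2 * j) * riemannZeta (2 * j))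
      + ((-1 : ℂ) ^ k / (2 * (Nat.factorial (2 * k - 1) : ℂ))) * (π : ℂ) ^ (2 * k)
      = ((2 : ℂ) ^ (1 - 2 * (k : ℤ)) - 1) * riemannZeta (2 * k) := by
    rw [Finset.sum_congr rfl hterm, ← Finset.mul_sum, ← Rat.cast_sum,
      bernoulli_even_sum k hk, hζ, hz]
    push_cast
    have f3 := hfac (2*k)
    have f4 := hfac (2*k-1)
    rw [← e3', hfs]
    field_simp
    ring
  refine ⟨?_, key2.symm⟩
  rw [key2]
  -- compute the tsum via the cosine formula at x = 1/2
  have hV := hasSum_one_div_nat_pow_mul_cos hk0 (x := (1/2 : ℝ))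
    (by norm_num : (1/2 : ℝ) ∈ Set.Icc (0:ℝ) 1)
  have hcos : ∀ n : ℕ, Real.cos (2 * π * n * (1/2 : ℝ)) = (-1 : ℝ)^n := by
    intro n
    rw [show 2 * π * (n:ℝ) * (1/2 : ℝ) = (n:ℝ) * π - 0 by ring, Real.cos_nat_mul_pi_sub,
      Real.cos_zero, mul_one]
  have heval : (Polynomial.map (algebraMap ℚ ℝ) (Polynomial.bernoulli (2*k))).eval ((1:ℝ)/2)
      = (((2 * (1/2 : ℚ)^(2*k) - 1) * bernoulli (2*k) : ℚ) : ℝ) := by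
    rw [show ((1:ℝ)/2) = algebraMap ℚ ℝ (1/2) by norm_num,
      Polynomial.eval_map_algebraMap, Polynomial.aeval_algebraMap_apply_eq_algebraMap_eval,
      bernoulli_poly_eval_half]
    rfl
  set V : ℝ := (-1:ℝ)^(k+1) * (2*π)^(2*k) / 2 / (2*k)!
      * (((2 * (1/2 : ℚ)^(2*k) - 1) * bernoulli (2*k) : ℚ) : ℝ) with hVdef
  have hV2 : HasSum (fun n : ℕ => (-1 : ℝ)^n / (n:ℝ)^(2*k)) V := by
    rw [hVdef, ← heval]
    convert hV using 2 with n
    rw [hcos n]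
    ring
  have hshift := (hasSum_nat_add_iff' (f := fun n : ℕ => (-1 : ℝ)^n / (n:ℝ)^(2*k)) 1).mpr hV2
  simp only [Finset.range_one, Finset.sum_singleton, Nat.cast_zero, pow_zero,
    zero_pow (by omega : 2*k ≠ 0), div_zero, sub_zero] at hshift
  have htsum : (∑' j : ℕ, ((-1 : ℝ)) ^ (j + 1) / ((j : ℝ) + 1) ^ (2 * k)) = V := by
    rw [← hshift.tsum_eq]
    congr 1 with n
    push_cast
    ring_nf
  rw [htsum, hVdef, hζ, hz]
  push_cast
  have f3 := hfac (2*k)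
  rw [mul_pow, one_div_pow, ← e3']
  have ht : (2:ℂ)^(2*k-1) ≠ 0 := pow_ne_zero _ two_ne_zero
  generalize (2:ℂ)^(2*k-1) = t at ht ⊢
  field_simp
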